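/- arXiv:2211.02920 — 4 statements merged into one kernel-verified Lean document; each statement's English description precedes it below -/
import Mathlib

section
/- Let S = D Dᵀ be the Gram matrix of a d₁×d₂ data matrix D, and suppose Ψ₁, Ψ₂ are symmetric positive definite matrices satisfying the stationarity equation S = tr_{d₁}[(Ψ₁ ⊕ Ψ₂)^{-1}] (where tr_{d₁} forms the d₁×d₁ matrix of traces of d₂×d₂ blocks). If V₁ diagonalizes Ψ₁ and V₂ diagonalizes Ψ₂ (orthogonally), then V₁ also orthogonally diagonalizes S; i.e., S and Ψ₁ share eigenvectors. -/
open Matrix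
open scoped Kronecker

/-- The blockwise trace `tr_b : M_{mb}(ℝ) → M_b(ℝ)`, `(tr_b M)_{ij} = tr(M (J^{ij} ⊗ I_m))`. -/
def blockTrace {b m : ℕ} (M : Matrix (Fin b × Fin m) (Fin b × Fin m) ℝ) :
    Matrix (Fin b) (Fin b) ℝ :=
  fun i j => (M * (single i j (1 : ℝ) ⊗ₖ (1 : Matrix (Fin m) (Fin m) ℝ))).trace

lemma blockTrace_apply {b m : ℕ} (M : Matrix (Fin b × Fin m) (Fin b × Fin m) ℝ)
    (i j : Fin b) : blockTrace M i j = ∑ k, M (j, k) (i, k) := by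
  simp [blockTrace, trace, Matrix.mul_apply, Matrix.diag, kroneckerMap_apply,
    single_apply, one_apply, Fintype.sum_prod_type, ite_and, mul_ite]

lemma eig_pos' {d : ℕ} (Ψ V Λ : Matrix (Fin d) (Fin d) ℝ)
    (hΨ : Ψ.PosDef) (hV' : Vᵀ * V = 1)
    (hdec : Ψ = V * Λ * Vᵀ) (p : Fin d) : 0 < Λ p p := by
  have hΛeq : Λ = Vᵀ * Ψ * V := by
    rw [hdec]
    rw [show Vᵀ * (V * Λ * Vᵀ) * V = Vᵀ * V * (Λ * (Vᵀ * V)) from by noncomm_ring, hV',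
      mul_one, one_mul]
  set v : Fin d → ℝ := fun k => V k p with hv
  have hvne : v ≠ 0 := by
    intro h0
    have h1 : (Vᵀ * V) p p = 1 := by rw [hV']; simp
    rw [Matrix.mul_apply] at h1
    simp only [transpose_apply] at h1
    have : (∑ k, V k p * V k p) = 0 := by
      refine Finset.sum_eq_zero fun k _ => ?_
      have : v k = 0 := by rw [h0]; rfl
      simp only [hv] at this; rw [this]; ring
    rw [this] at h1; norm_num at h1
  have hpos := hΨ.dotProduct_mulVec_pos hvne
  have : star v ⬝ᵥ Ψ *ᵥ v = Λ p p := by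
    rw [hΛeq]
    simp only [dotProduct, mulVec, Matrix.mul_apply, transpose_apply, star_trivial, dotProduct,
      Finset.sum_mul, Finset.mul_sum]
    rw [Finset.sum_comm]
    exact Finset.sum_congr rfl fun a _ => Finset.sum_congr rfl fun c _ => by ring
  rw [this] at hpos
  exact hpos

/-- If `S = D Dᵀ` satisfies the stationarity equation `S = tr_{d₁}[(Ψ₁ ⊕ Ψ₂)⁻¹]`
for symmetric positive definite `Ψ₁ = V₁Λ₁V₁ᵀ`, `Ψ₂ = V₂Λ₂V₂ᵀ` with `V₁, V₂`
orthogonal and `Λ₁, Λ₂` diagonal, then `V₁` also orthogonally diagonalizes `S`. -/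
theorem gram_shares_eigenvectors (d₁ d₂ : ℕ)
    (D : Matrix (Fin d₁) (Fin d₂) ℝ)
    (Ψ₁ V₁ Λ₁ : Matrix (Fin d₁) (Fin d₁) ℝ)
    (Ψ₂ V₂ Λ₂ : Matrix (Fin d₂) (Fin d₂) ℝ)
    (hΨ₁ : Ψ₁.PosDef) (hΨ₂ : Ψ₂.PosDef)
    (hV₁ : V₁ * V₁ᵀ = 1) (hV₁' : V₁ᵀ * V₁ = 1)
    (hV₂ : V₂ * V₂ᵀ = 1) (hV₂' : V₂ᵀ * V₂ = 1)
    (hΛ₁ : Λ₁.IsDiag) (hΛ₂ : Λ₂.IsDiag)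
    (hdec₁ : Ψ₁ = V₁ * Λ₁ * V₁ᵀ) (hdec₂ : Ψ₂ = V₂ * Λ₂ * V₂ᵀ)
    (hstat : D * Dᵀ = blockTrace
      ((Ψ₁ ⊗ₖ (1 : Matrix (Fin d₂) (Fin d₂) ℝ)
        + (1 : Matrix (Fin d₁) (Fin d₁) ℝ) ⊗ₖ Ψ₂)⁻¹)) :
    ∃ E : Matrix (Fin d₁) (Fin d₁) ℝ, E.IsDiag ∧ D * Dᵀ = V₁ * E * V₁ᵀ := by
  classical
  -- eigenvalue positivity
  have hpos₁ : ∀ p, 0 < Λ₁ p p := eig_pos' Ψ₁ V₁ Λ₁ hΨ₁ hV₁' hdec₁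
  have hpos₂ : ∀ q, 0 < Λ₂ q q := eig_pos' Ψ₂ V₂ Λ₂ hΨ₂ hV₂' hdec₂
  set dv : Fin d₁ × Fin d₂ → ℝ := fun pq => Λ₁ pq.1 pq.1 + Λ₂ pq.2 pq.2 with hdv
  have hdpos : ∀ pq, 0 < dv pq := fun pq => add_pos (hpos₁ pq.1) (hpos₂ pq.2)
  set nv : Fin d₁ × Fin d₂ → ℝ := fun pq => (dv pq)⁻¹ with hnv
  set W : Matrix (Fin d₁ × Fin d₂) (Fin d₁ × Fin d₂) ℝ := V₁ ⊗ₖ V₂ with hW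
  have hWT : Wᵀ = V₁ᵀ ⊗ₖ V₂ᵀ := (kroneckerMap_transpose _ _ _).symm
  have hWWT : W * Wᵀ = 1 := by
    rw [hW, hWT, ← mul_kronecker_mul, hV₁, hV₂, one_kronecker_one]
  have hWTW : Wᵀ * W = 1 := by
    rw [hW, hWT, ← mul_kronecker_mul, hV₁', hV₂', one_kronecker_one]
  -- diagonalization of the Kronecker sum
  have hΛ₁d : Λ₁ = Matrix.diagonal (fun p => Λ₁ p p) := hΛ₁.diagonal_diag.symm
  have hΛ₂d : Λ₂ = Matrix.diagonal (fun q => Λ₂ q q) := hΛ₂.diagonal_diag.symm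
  set K := Ψ₁ ⊗ₖ (1 : Matrix (Fin d₂) (Fin d₂) ℝ)
        + (1 : Matrix (Fin d₁) (Fin d₁) ℝ) ⊗ₖ Ψ₂ with hK
  have hKeq : K = W * Matrix.diagonal dv * Wᵀ := by
    have h1 : Ψ₁ ⊗ₖ (1 : Matrix (Fin d₂) (Fin d₂) ℝ)
        = W * (Λ₁ ⊗ₖ (1 : Matrix (Fin d₂) (Fin d₂) ℝ)) * Wᵀ := by
      rw [hW, hWT, ← mul_kronecker_mul, ← mul_kronecker_mul, mul_one, hV₂, ← hdec₁]
    have h2 : (1 : Matrix (Fin d₁) (Fin d₁) ℝ) ⊗ₖ Ψ₂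
        = W * ((1 : Matrix (Fin d₁) (Fin d₁) ℝ) ⊗ₖ Λ₂) * Wᵀ := by
      rw [hW, hWT, ← mul_kronecker_mul, ← mul_kronecker_mul, mul_one, hV₁, ← hdec₂]
    have hsum : Λ₁ ⊗ₖ (1 : Matrix (Fin d₂) (Fin d₂) ℝ)
        + (1 : Matrix (Fin d₁) (Fin d₁) ℝ) ⊗ₖ Λ₂ = Matrix.diagonal dv := by
      rw [hΛ₁d, hΛ₂d, ← Matrix.diagonal_one, ← Matrix.diagonal_one,
        diagonal_kronecker_diagonal, diagonal_kronecker_diagonal, Matrix.diagonal_add]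
      funext pq
      simp [hdv]
    rw [hK, h1, h2, ← hsum]
    noncomm_ring
  have hKinv : K⁻¹ = W * Matrix.diagonal nv * Wᵀ := by
    apply Matrix.inv_eq_right_inv
    rw [hKeq]
    rw [show W * Matrix.diagonal dv * Wᵀ * (W * Matrix.diagonal nv * Wᵀ)
        = W * Matrix.diagonal dv * (Wᵀ * W) * Matrix.diagonal nv * Wᵀ from by noncomm_ring,
      hWTW, mul_one, Matrix.mul_assoc W, Matrix.diagonal_mul_diagonal]
    rw [show (fun i => dv i * nv i) = fun _ : Fin d₁ × Fin d₂ => (1 : ℝ) from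
      funext fun pq => mul_inv_cancel₀ (hdpos pq).ne', Matrix.diagonal_one, mul_one, hWWT]
  -- the diagonal matrix E
  refine ⟨Matrix.diagonal (fun p => ∑ q, nv (p, q)), Matrix.isDiag_diagonal _, ?_⟩
  rw [hstat, hKinv]
  ext i j
  rw [blockTrace_apply]
  have h2 : ∀ q : Fin d₂, (∑ k, V₂ k q * V₂ k q) = 1 := by
    intro q
    have := congrFun (congrFun hV₂' q) q
    simpa [Matrix.mul_apply, Matrix.one_apply] using this
  have hM : ∀ x y : Fin d₁ × Fin d₂,
      (W * Matrix.diagonal nv * Wᵀ) x y = ∑ pq : Fin d₁ × Fin d₂,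
        V₁ x.1 pq.1 * V₂ x.2 pq.2 * (nv pq * (V₁ y.1 pq.1 * V₂ y.2 pq.2)) := by
    intro x y
    rw [Matrix.mul_assoc, Matrix.mul_apply]
    refine Finset.sum_congr rfl fun pq _ => ?_
    rw [Matrix.diagonal_mul, transpose_apply]
    rfl
  calc (∑ k, (W * Matrix.diagonal nv * Wᵀ) (j, k) (i, k))
      = ∑ k, ∑ pq : Fin d₁ × Fin d₂,
          V₁ j pq.1 * V₂ k pq.2 * (nv pq * (V₁ i pq.1 * V₂ k pq.2)) := by
        exact Finset.sum_congr rfl fun k _ => hM (j, k) (i, k)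
    _ = ∑ pq : Fin d₁ × Fin d₂, ∑ k,
          V₁ j pq.1 * V₂ k pq.2 * (nv pq * (V₁ i pq.1 * V₂ k pq.2)) := Finset.sum_comm
    _ = ∑ pq : Fin d₁ × Fin d₂, V₁ j pq.1 * (nv pq * V₁ i pq.1) := by
        refine Finset.sum_congr rfl fun pq _ => ?_
        calc (∑ k, V₁ j pq.1 * V₂ k pq.2 * (nv pq * (V₁ i pq.1 * V₂ k pq.2)))
            = ∑ k, (V₁ j pq.1 * (nv pq * V₁ i pq.1)) * (V₂ k pq.2 * V₂ k pq.2) := by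
              exact Finset.sum_congr rfl fun k _ => by ring
          _ = (V₁ j pq.1 * (nv pq * V₁ i pq.1)) * ∑ k, V₂ k pq.2 * V₂ k pq.2 := by
              rw [Finset.mul_sum]
          _ = V₁ j pq.1 * (nv pq * V₁ i pq.1) := by rw [h2]; ring
    _ = ∑ p, ∑ q, V₁ j p * (nv (p, q) * V₁ i p) := Fintype.sum_prod_type _
    _ = (V₁ * Matrix.diagonal (fun p => ∑ q, nv (p, q)) * V₁ᵀ) i j := by
        rw [Matrix.mul_assoc, Matrix.mul_apply]
        refine Finset.sum_congr rfl fun p _ => ?_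
        rw [Matrix.diagonal_mul, transpose_apply]
        simp only [Finset.mul_sum, Finset.sum_mul]
        exact Finset.sum_congr rfl fun q _ => by ring
end

section
/- det(A ⊕ B) = ∏_{i,j} (λ_i + μ_j), where λ_i are the eigenvalues of the symmetric matrix A and μ_j the eigenvalues of the symmetric matrix B, and A ⊕ B = A ⊗ I_b + I_a ⊗ B. -/
open Matrix
open scoped Kronecker

/-- `det(A ⊕ B) = ∏_{i,j} (λ_i + μ_j)` where `λ_i`, `μ_j` are the eigenvalues of
the real symmetric matrices `A` and `B`. -/
theorem det_kroneckerSum (a b : ℕ)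
    (A : Matrix (Fin a) (Fin a) ℝ) (B : Matrix (Fin b) (Fin b) ℝ)
    (hA : A.IsHermitian) (hB : B.IsHermitian) :
    (A ⊗ₖ (1 : Matrix (Fin b) (Fin b) ℝ)
      + (1 : Matrix (Fin a) (Fin a) ℝ) ⊗ₖ B).det
    = ∏ i : Fin a, ∏ j : Fin b, (hA.eigenvalues i + hB.eigenvalues j) := by
  set U : Matrix (Fin a) (Fin a) ℝ := (hA.eigenvectorUnitary : Matrix (Fin a) (Fin a) ℝ)
  set V : Matrix (Fin b) (Fin b) ℝ := (hB.eigenvectorUnitary : Matrix (Fin b) (Fin b) ℝ)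
  have hU : U * star U = 1 := (Matrix.mem_unitaryGroup_iff).mp hA.eigenvectorUnitary.2
  have hV : V * star V = 1 := (Matrix.mem_unitaryGroup_iff).mp hB.eigenvectorUnitary.2
  have hDA : A = U * diagonal hA.eigenvalues * star U := by
    simpa using hA.spectral_theorem
  have hDB : B = V * diagonal hB.eigenvalues * star V := by
    simpa using hB.spectral_theorem
  have key : A ⊗ₖ (1 : Matrix (Fin b) (Fin b) ℝ) + (1 : Matrix (Fin a) (Fin a) ℝ) ⊗ₖ B
      = (U ⊗ₖ V) * (diagonal (fun p : Fin a × Fin b => hA.eigenvalues p.1 + hB.eigenvalues p.2))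
        * (star U ⊗ₖ star V) := by
    have h1 : (1 : Matrix (Fin b) (Fin b) ℝ) = V * 1 * star V := by
      rw [mul_one, hV]
    have h2 : (1 : Matrix (Fin a) (Fin a) ℝ) = U * 1 * star U := by
      rw [mul_one, hU]
    have hd : (diagonal (fun p : Fin a × Fin b => hA.eigenvalues p.1 + hB.eigenvalues p.2))
        = diagonal hA.eigenvalues ⊗ₖ (1 : Matrix (Fin b) (Fin b) ℝ)
          + (1 : Matrix (Fin a) (Fin a) ℝ) ⊗ₖ diagonal hB.eigenvalues := by
      rw [← Matrix.diagonal_one, ← Matrix.diagonal_one,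
        Matrix.diagonal_kronecker_diagonal, Matrix.diagonal_kronecker_diagonal,
        Matrix.diagonal_add]
      ext p
      simp
    conv_lhs => rw [hDA, h1, hDB, h2]
    rw [hd, Matrix.mul_add, Matrix.add_mul, ← Matrix.mul_kronecker_mul,
      ← Matrix.mul_kronecker_mul, ← Matrix.mul_kronecker_mul, ← Matrix.mul_kronecker_mul]
  rw [key, Matrix.det_mul_right_comm, ← Matrix.mul_kronecker_mul, hU, hV,
    Matrix.one_kronecker_one, Matrix.one_mul, Matrix.det_diagonal,
    Fintype.prod_prod_type]
end

section
/- Let Ψ₁ be a d₁×d₁ symmetric positive definite matrix that is block-diagonal with respect to a partition π of {1,…,d₁}, and let Ψ₂ be any d₂×d₂ symmetric positive definite matrix. Then the d₁×d₁ matrix tr_{d₁}[(Ψ₁ ⊕ Ψ₂)^{-1}] is also block-diagonal with respect to π. -/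
open Matrix
open scoped Kronecker

private lemma psd_isUnit_posDef {n : Type*} [Fintype n] [DecidableEq n]
    {M : Matrix n n ℝ} (h : M.PosSemidef) (hd : IsUnit M.det) : M.PosDef := by
  exact h.posDef_iff_isUnit.mpr ((isUnit_iff_isUnit_det M).mpr hd)

private lemma psd_kronecker {n m : Type*} [Fintype n] [Fintype m] [DecidableEq n] [DecidableEq m]
    {A : Matrix n n ℝ} {B : Matrix m m ℝ} (hA : A.PosSemidef) (hB : B.PosSemidef) :
    (A ⊗ₖ B).PosSemidef := by
  exact hA.kronecker hB

private lemma posDef_kronecker {n m : Type*} [Fintype n] [Fintype m] [DecidableEq n]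
    [DecidableEq m] {A : Matrix n n ℝ} {B : Matrix m m ℝ} (hA : A.PosDef) (hB : B.PosDef) :
    (A ⊗ₖ B).PosDef := by
  refine psd_isUnit_posDef (psd_kronecker hA.posSemidef hB.posSemidef) ?_
  rw [Matrix.det_kronecker]
  exact (mul_pos (pow_pos hA.det_pos _) (pow_pos hB.det_pos _)).ne'.isUnit

private lemma posDef_one {n : Type*} [Fintype n] [DecidableEq n] :
    (1 : Matrix n n ℝ).PosDef :=
  psd_isUnit_posDef .one (by simp)

/-- If `Ψ₁` is symmetric positive definite and block-diagonal with respect to a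
partition of `{1,…,d₁}` and `Ψ₂` is symmetric positive definite, then
`tr_{d₁}[(Ψ₁ ⊕ Ψ₂)⁻¹]` is block-diagonal with respect to the same partition. -/
theorem blockTrace_inv_kroneckerSum_blockDiag (d₁ d₂ : ℕ) {γ : Type*} (g : Fin d₁ → γ)
    (Ψ₁ : Matrix (Fin d₁) (Fin d₁) ℝ) (Ψ₂ : Matrix (Fin d₂) (Fin d₂) ℝ)
    (hΨ₁ : Ψ₁.PosDef) (hΨ₂ : Ψ₂.PosDef)
    (hblock : ∀ i j : Fin d₁, g i ≠ g j → Ψ₁ i j = 0) :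
    ∀ i j : Fin d₁, g i ≠ g j →
      blockTrace ((Ψ₁ ⊗ₖ (1 : Matrix (Fin d₂) (Fin d₂) ℝ)
        + (1 : Matrix (Fin d₁) (Fin d₁) ℝ) ⊗ₖ Ψ₂)⁻¹) i j = 0 := by
  classical
  set M : Matrix (Fin d₁ × Fin d₂) (Fin d₁ × Fin d₂) ℝ :=
    Ψ₁ ⊗ₖ (1 : Matrix (Fin d₂) (Fin d₂) ℝ) + (1 : Matrix (Fin d₁) (Fin d₁) ℝ) ⊗ₖ Ψ₂ with hMdef
  -- M is positive definite, hence invertible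
  have hMpd : M.PosDef :=
    (posDef_kronecker hΨ₁ posDef_one).add_posSemidef
      (psd_kronecker Matrix.PosSemidef.one hΨ₂.posSemidef)
  haveI : Invertible M := hMpd.isUnit.invertible
  -- the block labelling function
  have hne : ∀ x : Fin d₁ × Fin d₂,
      (Finset.univ.filter (fun k => g k = g x.1)).Nonempty :=
    fun x => ⟨x.1, by simp⟩
  set b : Fin d₁ × Fin d₂ → Fin d₁ :=
    fun x => (Finset.univ.filter (fun k => g k = g x.1)).min' (hne x) with hbdef
  have hgb : ∀ x, g (b x) = g x.1 := by
    intro x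
    have := Finset.min'_mem _ (hne x)
    simpa [hbdef] using (Finset.mem_filter.mp this).2
  have hb_eq : ∀ x y : Fin d₁ × Fin d₂, g x.1 = g y.1 → b x = b y := by
    intro x y h
    simp only [hbdef, h]
  have hb_ne : ∀ x y : Fin d₁ × Fin d₂, b x ≠ b y → g x.1 ≠ g y.1 :=
    fun x y h hg => h (hb_eq x y hg)
  -- M is zero off the blocks
  have hM0 : ∀ x y : Fin d₁ × Fin d₂, g x.1 ≠ g y.1 → M x y = 0 := by
    intro x y h
    have hne1 : x.1 ≠ y.1 := fun he => h (by rw [he])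
    simp [hMdef, Matrix.add_apply, kroneckerMap_apply, hblock _ _ h,
      Matrix.one_apply_ne hne1]
  -- M is block triangular both ways
  have ht1 : M.BlockTriangular b := by
    intro x y hlt
    exact hM0 x y (hb_ne x y (ne_of_gt hlt))
  have ht2 : M.BlockTriangular (OrderDual.toDual ∘ b) := by
    intro x y hlt
    exact hM0 x y (hb_ne x y (ne_of_lt hlt))
  have hi1 := blockTriangular_inv_of_blockTriangular ht1
  have hi2 := blockTriangular_inv_of_blockTriangular ht2
  -- hence M⁻¹ is zero off the blocks
  have hMinv0 : ∀ x y : Fin d₁ × Fin d₂, g x.1 ≠ g y.1 → M⁻¹ x y = 0 := by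
    intro x y h
    rcases lt_trichotomy (b x) (b y) with hlt | heq | hgt
    · exact hi2 hlt
    · exact absurd (by rw [← hgb x, heq, hgb y]) h
    · exact hi1 hgt
  -- compute the block trace
  intro i j hij
  show (M⁻¹ * (single i j (1 : ℝ) ⊗ₖ (1 : Matrix (Fin d₂) (Fin d₂) ℝ))).trace = 0
  rw [Matrix.trace]
  refine Finset.sum_eq_zero fun x _ => ?_
  rw [Matrix.diag_apply, Matrix.mul_apply]
  refine Finset.sum_eq_zero fun y _ => ?_
  rcases x with ⟨k, a⟩
  rcases y with ⟨l, c⟩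
  by_cases h1 : i = l ∧ j = k
  · obtain ⟨rfl, rfl⟩ := h1
    have : M⁻¹ (j, a) (i, c) = 0 := hMinv0 _ _ (Ne.symm hij)
    rw [this, zero_mul]
  · rw [kroneckerMap_apply, Matrix.single_apply_of_ne _ _ _ _ _ h1, zero_mul, mul_zero]
end

section
/- For a convex differentiable function f on symmetric matrices whose gradient at Ψ is S − F(Ψ), augmented by an L1 penalty ρ‖Ψ‖₁ (entrywise), the subgradient optimality (KKT) conditions at a point Ψ̂ are: |S_{ij} − F(Ψ̂)_{ij}| ≤ ρ when Ψ̂_{ij} = 0, F(Ψ̂)_{ij} = S_{ij} + ρ when Ψ̂_{ij} > 0, and F(Ψ̂)_{ij} = S_{ij} − ρ when Ψ̂_{ij} < 0. Prove that if additionally F preserves block-diagonal structure (F(Ψ) is block-diagonal with respect to any partition making Ψ block-diagonal), and Ψ̂ satisfying the KKT conditions is block-diagonal with respect to a partition π, then every entry of S off the block diagonal of π has magnitude at most ρ. -/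
open Matrix

/-- KKT conditions for the L1-penalized problem: if `F` preserves block-diagonal
structure and `Ψ̂` satisfying the KKT conditions is block-diagonal with respect
to a partition, then every entry of `S` off the block diagonal has magnitude at
most `ρ`. -/
theorem kkt_offdiag_small (n : ℕ) {γ : Type*} (g : Fin n → γ)
    (S : Matrix (Fin n) (Fin n) ℝ) (hS : S.IsSymm) (ρ : ℝ) (hρ : 0 < ρ)
    (F : Matrix (Fin n) (Fin n) ℝ → Matrix (Fin n) (Fin n) ℝ)
    (hFsymm : ∀ Ψ : Matrix (Fin n) (Fin n) ℝ, Ψ.IsSymm → (F Ψ).IsSymm)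
    (hFblock : ∀ {γ' : Type} (g' : Fin n → γ') (Ψ : Matrix (Fin n) (Fin n) ℝ),
      (∀ i j : Fin n, g' i ≠ g' j → Ψ i j = 0) →
      ∀ i j : Fin n, g' i ≠ g' j → F Ψ i j = 0)
    (Ψhat : Matrix (Fin n) (Fin n) ℝ) (hΨsymm : Ψhat.IsSymm)
    (hKKT0 : ∀ i j : Fin n, Ψhat i j = 0 → |S i j - F Ψhat i j| ≤ ρ)
    (hKKTpos : ∀ i j : Fin n, 0 < Ψhat i j → F Ψhat i j = S i j + ρ)
    (hKKTneg : ∀ i j : Fin n, Ψhat i j < 0 → F Ψhat i j = S i j - ρ)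
    (hΨblock : ∀ i j : Fin n, g i ≠ g j → Ψhat i j = 0) :
    ∀ i j : Fin n, g i ≠ g j → |S i j| ≤ ρ := by
  classical
  intro i j hij
  set g' : Fin n → Finset (Fin n) := fun i => Finset.univ.filter (fun k => g k = g i) with hg'
  have hgg : ∀ a b : Fin n, g' a ≠ g' b → g a ≠ g b := by
    intro a b h hab
    exact h (by simp [hg', hab])
  have hg'ij : g' i ≠ g' j := by
    intro h
    apply hij
    have : i ∈ g' j := h ▸ (by simp [hg'])
    simpa [hg'] using this
  have hΨ0 : Ψhat i j = 0 := hΨblock i j hij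
  have hF0 : F Ψhat i j = 0 :=
    hFblock g' Ψhat (fun a b h => hΨblock a b (hgg a b h)) i j hg'ij
  have := hKKT0 i j hΨ0
  rwa [hF0, sub_zero] at this
end
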